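/- Let S be a smooth complex submanifold of M and f ∈ End(M,S), f ≢ id, with order of contact ν_f. In any chart (U,z) adapted to S write f^j − z^j = z^{r_1}⋯z^{r_{ν_f}} g^j_{r_1…r_{ν_f}} with symmetric coefficients not all vanishing on S. Then the local expressions g^h_{s_1…s_{ν_f}}|_S · ∂/∂z^h ⊗ ω^{s_1} ⊗ ⋯ ⊗ ω^{s_{ν_f}} glue to a globally well-defined holomorphic section X_f of TM|_S ⊗ (N_S^*)^{⊗ν_f} (the canonical section associated to f). -/

import Mathlib

open Filter Topology

abbrev Esp (n : ℕ) := Fin n → ℂ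

/-- The local model of the smooth submanifold `S` of codimension `m`: `{z' = 0}`. -/
def sliceSet (n m : ℕ) : Set (Esp n) := {x | ∀ r : Fin n, (r : ℕ) < m → x r = 0}

/-!
STATEMENT 8.  `S = {z' = 0}` is smooth of codimension `m`, pointwise fixed by `f ≢ id`
with order of contact `ν = ν_f`.  Two adapted charts are considered: the identity chart
`z` on `U`, and a chart `ẑ = φ` with inverse `ψ`, both holomorphic and adapted to `S`
(`hφS`, `hψS`).  In each chart `f` is expanded as in (3.1):
`f^j − z^j = z^{r_1}⋯z^{r_ν} g^j_{r_1…r_ν}` (`hfg`), and for `f̂ = φ ∘ f ∘ ψ`,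
`f̂^j − ẑ^j = ẑ^{r_1}⋯ẑ^{r_ν} ĝ^j_{r_1…r_ν}` (`hfghat`), with symmetric coefficients;
multi-indices are `κ : Fin ν → Fin m` embedded via `Fin.castLE`.  Conclusion: at every
point `p ∈ S` in the overlap, the local expressions
`g^h_{…}|_S ∂/∂z^h ⊗ ω^{…}` and `ĝ^j_{…}|_S ∂/∂ẑ^j ⊗ ω̂^{…}` define the same element
of `TM|_S ⊗ (N_S^*)^{⊗ν}`: expressing the hatted tensor in the unhatted frames via the
Jacobians of `φ` and `ψ` returns exactly `g`.  Hence the `X_f`'s glue to a global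
holomorphic section `X_f` of `TM|_S ⊗ (N_S^*)^{⊗ν_f}`.
-/
open Asymptotics

lemma exists_perm_of_fiber_card_eq {ν m : ℕ} (κ κ₀ : Fin ν → Fin m)
    (hc : ∀ s : Fin m, Fintype.card {i // κ i = s} = Fintype.card {i // κ₀ i = s}) :
    ∃ σ : Equiv.Perm (Fin ν), κ = κ₀ ∘ σ := by
  classical
  let e : ∀ s, {i // κ i = s} ≃ {i // κ₀ i = s} := fun s => Fintype.equivOfCardEq (hc s)
  refine ⟨(Equiv.sigmaFiberEquiv κ).symm.trans
    ((Equiv.sigmaCongrRight e).trans (Equiv.sigmaFiberEquiv κ₀)), ?_⟩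
  funext i
  have h1 : (Equiv.sigmaFiberEquiv κ).symm i = ⟨κ i, ⟨i, rfl⟩⟩ := rfl
  simp only [Function.comp_apply, Equiv.trans_apply, h1, Equiv.sigmaCongrRight_apply]
  exact ((e (κ i)) ⟨i, rfl⟩).2.symm

lemma fiber_card_of_msum_eq {ν m : ℕ} (κ κ₀ : Fin ν → Fin m)
    (h : ∑ i, Finsupp.single (κ i) (1:ℕ) = ∑ i, Finsupp.single (κ₀ i) 1) :
    ∀ s : Fin m, Fintype.card {i // κ i = s} = Fintype.card {i // κ₀ i = s} := by
  classical
  intro s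
  have h2 := DFunLike.congr_fun h s
  have e : ∀ (τ : Fin ν → Fin m), ((∑ i, Finsupp.single (τ i) (1:ℕ)) s)
      = Fintype.card {i // τ i = s} := by
    intro τ
    rw [Finsupp.finset_sum_apply]
    simp only [Finsupp.single_apply, Fintype.card_subtype, Finset.card_filter]
  rw [e κ, e κ₀] at h2; exact h2

lemma polarization {ν m : ℕ} (d : (Fin ν → Fin m) → ℂ)
    (hsym : ∀ κ (σ : Equiv.Perm (Fin ν)), d (κ ∘ σ) = d κ)
    (hzero : ∀ u : Fin m → ℂ, ∑ κ : Fin ν → Fin m, (∏ i, u (κ i)) * d κ = 0) :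
    ∀ κ, d κ = 0 := by
  classical
  intro κ₀
  set msum : (Fin ν → Fin m) → (Fin m →₀ ℕ) := fun κ => ∑ i, Finsupp.single (κ i) 1 with hmsum
  set P : MvPolynomial (Fin m) ℂ :=
    ∑ κ : Fin ν → Fin m, MvPolynomial.monomial (msum κ) (d κ) with hP
  have hmono : ∀ (κ : Fin ν → Fin m),
      MvPolynomial.monomial (msum κ) (d κ) = MvPolynomial.C (d κ) * ∏ i, MvPolynomial.X (κ i) := by
    intro κ
    rw [MvPolynomial.monomial_eq]
    congr 1
    rw [hmsum]
    induction (Finset.univ : Finset (Fin ν)) using Finset.induction with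
    | empty => simp
    | insert hx ih => simp_all [Finsupp.prod_add_index, pow_add]
  have hP0 : P = 0 := by
    apply MvPolynomial.funext
    intro u
    rw [hP, map_sum, map_zero]
    rw [← hzero u]
    refine Finset.sum_congr rfl fun κ _ => ?_
    rw [hmono, map_mul, MvPolynomial.eval_C, map_prod]
    simp [mul_comm]
  have hcoeff := congrArg (MvPolynomial.coeff (msum κ₀)) hP0
  rw [hP, MvPolynomial.coeff_zero] at hcoeff
  rw [MvPolynomial.coeff_sum] at hcoeff
  simp only [MvPolynomial.coeff_monomial] at hcoeff
  rw [← Finset.sum_filter] at hcoeff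
  have hall : ∀ κ ∈ Finset.univ.filter (fun κ => msum κ = msum κ₀), d κ = d κ₀ := by
    intro κ hκ
    rw [Finset.mem_filter] at hκ
    obtain ⟨σ, hσ⟩ := exists_perm_of_fiber_card_eq κ κ₀ (fiber_card_of_msum_eq κ κ₀ hκ.2)
    rw [hσ, hsym]
  rw [Finset.sum_congr rfl hall, Finset.sum_const, nsmul_eq_mul] at hcoeff
  have hmem : κ₀ ∈ Finset.univ.filter (fun κ => msum κ = msum κ₀) := by simp
  have hpos : ((Finset.univ.filter (fun κ => msum κ = msum κ₀)).card : ℂ) ≠ 0 := by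
    have := Finset.card_pos.mpr ⟨κ₀, hmem⟩
    exact_mod_cast this.ne'
  exact (mul_eq_zero.mp hcoeff).resolve_left hpos


theorem statement_8 {n m : ℕ} (hm : 0 < m) (hmn : m < n) (ν : ℕ) (hν : 1 ≤ ν)
    (U V : Set (Esp n)) (hU : IsOpen U) (hV : IsOpen V)
    (φ ψ : Esp n → Esp n) (hφa : AnalyticOnNhd ℂ φ U) (hψa : AnalyticOnNhd ℂ ψ V)
    (hφV : Set.MapsTo φ U V) (hψU : Set.MapsTo ψ V U)
    (hψφ : ∀ x ∈ U, ψ (φ x) = x) (hφψ : ∀ w ∈ V, φ (ψ w) = w)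
    (hφS : ∀ x ∈ U ∩ sliceSet n m, φ x ∈ sliceSet n m)
    (hψS : ∀ w ∈ V ∩ sliceSet n m, ψ w ∈ sliceSet n m)
    (f : Esp n → Esp n) (hfa : AnalyticOnNhd ℂ f U) (hfU : Set.MapsTo f U U)
    (hfix : ∀ x ∈ U ∩ sliceSet n m, f x = x)
    (g ghat : Fin n → (Fin ν → Fin m) → Esp n → ℂ)
    (hga : ∀ j κ, AnalyticOnNhd ℂ (g j κ) U)
    (hghata : ∀ j κ, AnalyticOnNhd ℂ (ghat j κ) V)
    (hgsym : ∀ j κ (σ : Equiv.Perm (Fin ν)), g j (κ ∘ σ) = g j κ)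
    (hghatsym : ∀ j κ (σ : Equiv.Perm (Fin ν)), ghat j (κ ∘ σ) = ghat j κ)
    (hfg : ∀ x ∈ U, ∀ j : Fin n,
      f x j - x j = ∑ κ : Fin ν → Fin m,
        (∏ i, x (Fin.castLE hmn.le (κ i))) * g j κ x)
    (hfghat : ∀ w ∈ V, ∀ j : Fin n,
      φ (f (ψ w)) j - w j = ∑ κ : Fin ν → Fin m,
        (∏ i, w (Fin.castLE hmn.le (κ i))) * ghat j κ w) :
    ∀ p ∈ U ∩ sliceSet n m, ∀ (h : Fin n) (κ : Fin ν → Fin m),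
      g h κ p =
        ∑ j : Fin n, ∑ κ' : Fin ν → Fin m,
          (fderiv ℂ ψ (φ p) (Pi.single j 1) h) * ghat j κ' (φ p) *
            ∏ i, (fderiv ℂ φ p (Pi.single (Fin.castLE hmn.le (κ i)) 1)
                    (Fin.castLE hmn.le (κ' i))) := by
  intro p hp h κ₀
  classical
  have hpU : p ∈ U := hp.1
  have hpS : p ∈ sliceSet n m := hp.2
  have hφpV : φ p ∈ V := hφV hpU
  have hφpS : φ p ∈ sliceSet n m := hφS p hp
  set Lφ : Esp n →L[ℂ] Esp n := fderiv ℂ φ p with hLφ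
  set Lψ : Esp n →L[ℂ] Esp n := fderiv ℂ ψ (φ p) with hLψ
  set G : (Fin ν → Fin m) → ℂ := fun κ =>
    ∑ j : Fin n, ∑ κ' : Fin ν → Fin m,
      (Lψ (Pi.single j 1) h) * ghat j κ' (φ p) *
        ∏ i, (Lφ (Pi.single (Fin.castLE hmn.le (κ i)) 1) (Fin.castLE hmn.le (κ' i))) with hG
  have key : ∀ u : Fin m → ℂ,
      (∑ κ : Fin ν → Fin m, (∏ i, u (κ i)) * g h κ p)
      = ∑ κ : Fin ν → Fin m, (∏ i, u (κ i)) * G κ := by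
    intro u
    set uv : Esp n := ∑ s : Fin m, u s • (Pi.single (Fin.castLE hmn.le s) (1:ℂ) : Esp n) with huv
    have huvat : ∀ s : Fin m, uv (Fin.castLE hmn.le s) = u s := by
      intro s
      rw [huv]
      simp [Finset.sum_apply, Pi.single_apply, Fin.castLE_inj]
    set c : ℂ → Esp n := fun t => p + t • uv with hc
    have hc0 : c 0 = p := by simp [hc]
    have hccont : Continuous c := continuous_const.add (continuous_id.smul continuous_const)
    have hcp : Tendsto c (𝓝 0) (𝓝 p) := by
      have := hccont.tendsto 0; rwa [hc0] at this
    have hcp' : Tendsto c (𝓝[≠] 0) (𝓝 p) := hcp.mono_left nhdsWithin_le_nhds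
    have hcU : ∀ᶠ t in 𝓝[≠] (0:ℂ), c t ∈ U :=
      (hcp.eventually (hU.eventually_mem hpU)).filter_mono nhdsWithin_le_nhds
    have hcslice : ∀ (t : ℂ) (r : Fin m), c t (Fin.castLE hmn.le r) = t * u r := by
      intro t r
      have hz : p (Fin.castLE hmn.le r) = 0 := hpS _ (by simpa using r.2)
      simp [hc, hz, huvat r]
    -- LHS limit
    have limL : Tendsto (fun t : ℂ => (f (c t) h - c t h) / t^ν) (𝓝[≠] 0)
        (𝓝 (∑ κ : Fin ν → Fin m, (∏ i, u (κ i)) * g h κ p)) := by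
      have hcongr : ∀ᶠ t in 𝓝[≠] (0:ℂ),
          (∑ κ : Fin ν → Fin m, (∏ i, u (κ i)) * g h κ (c t))
            = (f (c t) h - c t h) / t^ν := by
        filter_upwards [hcU, self_mem_nhdsWithin] with t htU ht0
        have ht0' : t ≠ 0 := ht0
        rw [hfg (c t) htU h]
        have hterm : ∀ κ : Fin ν → Fin m,
            (∏ i, c t (Fin.castLE hmn.le (κ i))) * g h κ (c t)
              = t^ν * ((∏ i, u (κ i)) * g h κ (c t)) := by
          intro κ
          rw [Finset.prod_congr rfl (fun i _ => hcslice t (κ i)), Finset.prod_mul_distrib,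
            Finset.prod_const, Finset.card_univ, Fintype.card_fin, mul_assoc]
        rw [Finset.sum_congr rfl (fun κ _ => hterm κ), ← Finset.mul_sum,
          mul_div_cancel_left₀ _ (pow_ne_zero ν ht0')]
      refine Tendsto.congr' hcongr ?_
      apply tendsto_finset_sum
      intro κ _
      exact (tendsto_const_nhds.mul (((hga h κ p hpU).continuousAt.tendsto).comp hcp'))
    -- RHS limit setup
    set w : ℂ → Esp n := fun t => φ (c t) with hw
    have hφc : ContinuousAt φ p := (hφa p hpU).continuousAt
    have hwp : Tendsto w (𝓝[≠] 0) (𝓝 (φ p)) := hφc.tendsto.comp hcp'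
    have hwV : ∀ᶠ t in 𝓝[≠] (0:ℂ), w t ∈ V := hwp.eventually (hV.eventually_mem hφpV)
    have hderc : HasDerivAt c uv 0 := by
      have h1 : HasDerivAt (fun t : ℂ => t • uv) ((1:ℂ) • uv) 0 :=
        (hasDerivAt_id (0:ℂ)).smul_const uv
      rw [one_smul] at h1
      exact h1.const_add p
    have hφfd : HasFDerivAt φ Lφ (c 0) := hc0.symm ▸ (hφa p hpU).differentiableAt.hasFDerivAt
    have hder : HasDerivAt (φ ∘ c) (Lφ uv) 0 := hφfd.comp_hasDerivAt 0 hderc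
    have hslope : Tendsto (fun t : ℂ => t⁻¹ • (w t - φ p)) (𝓝[≠] 0) (𝓝 (Lφ uv)) := by
      have h1 := hasDerivAt_iff_tendsto_slope.mp hder
      refine h1.congr fun t => ?_
      rw [slope_def_module]
      simp [hw, hc0, Function.comp]
    have hwslope : ∀ r : Fin m, Tendsto (fun t : ℂ => w t (Fin.castLE hmn.le r) / t)
        (𝓝[≠] 0) (𝓝 (Lφ uv (Fin.castLE hmn.le r))) := by
      intro r
      have hz : φ p (Fin.castLE hmn.le r) = 0 := hφpS _ (by simpa using r.2)
      have h1 := ((continuous_apply (Fin.castLE hmn.le r)).tendsto (Lφ uv)).comp hslope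
      refine h1.congr fun t => ?_
      simp [hz, div_eq_inv_mul]
    set D : ℂ → Esp n := fun t => φ (f (c t)) - w t with hD
    set A : Esp n := fun j => ∑ κ' : Fin ν → Fin m,
      (∏ i, Lφ uv (Fin.castLE hmn.le (κ' i))) * ghat j κ' (φ p) with hA
    have hDexp : ∀ᶠ t in 𝓝[≠] (0:ℂ), ∀ j : Fin n, D t j
        = ∑ κ' : Fin ν → Fin m, (∏ i, w t (Fin.castLE hmn.le (κ' i))) * ghat j κ' (w t) := by
      filter_upwards [hwV, hcU] with t htV htU j
      have hψw : ψ (w t) = c t := hψφ _ htU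
      have h1 := hfghat (w t) htV j
      rw [hψw] at h1
      simpa [hD] using h1
    have hDA : Tendsto (fun t : ℂ => (t^ν)⁻¹ • D t) (𝓝[≠] 0) (𝓝 A) := by
      rw [tendsto_pi_nhds]
      intro j
      have hcongr : ∀ᶠ t in 𝓝[≠] (0:ℂ),
          (∑ κ' : Fin ν → Fin m, (∏ i, w t (Fin.castLE hmn.le (κ' i)) / t) * ghat j κ' (w t))
            = ((t^ν)⁻¹ • D t) j := by
        filter_upwards [hDexp, self_mem_nhdsWithin] with t hDt ht0
        have ht0' : t ≠ 0 := ht0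
        rw [Pi.smul_apply, hDt j, smul_eq_mul, Finset.mul_sum]
        refine Finset.sum_congr rfl fun κ' _ => ?_
        rw [← mul_assoc]
        congr 1
        rw [Finset.prod_div_distrib, Finset.prod_const, Finset.card_univ, Fintype.card_fin,
          inv_mul_eq_div, div_eq_div_iff (pow_ne_zero ν ht0') (pow_ne_zero ν ht0')]
      refine Tendsto.congr' hcongr ?_
      have hAj : A j = ∑ κ' : Fin ν → Fin m,
          (∏ i, Lφ uv (Fin.castLE hmn.le (κ' i))) * ghat j κ' (φ p) := by rw [hA]
      rw [hAj]
      apply tendsto_finset_sum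
      intro κ' _
      exact (tendsto_finset_prod _ fun i _ => hwslope (κ' i)).mul
        (((hghata j κ' (φ p) hφpV).continuousAt.tendsto).comp hwp)
    have hstrict : HasStrictFDerivAt ψ Lψ (φ p) := (hψa (φ p) hφpV).hasStrictFDerivAt
    have hfp : f p = p := hfix p hp
    have hfcp : Tendsto (fun t => φ (f (c t))) (𝓝[≠] 0) (𝓝 (φ p)) := by
      have h1 : Tendsto (fun t => f (c t)) (𝓝[≠] 0) (𝓝 p) := by
        have h2 := ((hfa p hpU).continuousAt.tendsto).comp hcp'
        rwa [hfp] at h2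
      exact hφc.tendsto.comp h1
    have hlittle : (fun t => ψ (φ (f (c t))) - ψ (w t) - Lψ (D t)) =o[𝓝[≠] (0:ℂ)] D := by
      have hpair : Tendsto (fun t => (φ (f (c t)), w t)) (𝓝[≠] 0) (𝓝 (φ p, φ p)) :=
        hfcp.prodMk_nhds hwp
      exact hstrict.isLittleO.comp_tendsto hpair
    have hDO : D =O[𝓝[≠] (0:ℂ)] (fun t => t^ν) := by
      have h1 : (fun t : ℂ => (t^ν)⁻¹ • D t) =O[𝓝[≠] (0:ℂ)] (fun _ => (1:ℂ)) :=
        hDA.isBigO_one ℂ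
      have h2 := (isBigO_refl (fun t : ℂ => t^ν) (𝓝[≠] (0:ℂ))).smul h1
      refine IsBigO.congr' h2 ?_ ?_
      · filter_upwards [self_mem_nhdsWithin] with t ht
        have ht' : t ≠ 0 := ht
        rw [smul_smul, mul_inv_cancel₀ (pow_ne_zero ν ht'), one_smul]
      · filter_upwards with t
        simp
    have hEh : Tendsto (fun t : ℂ => (ψ (φ (f (c t))) h - ψ (w t) h - Lψ (D t) h) / t^ν)
        (𝓝[≠] 0) (𝓝 0) := by
      have h1 : (fun t : ℂ => ψ (φ (f (c t))) h - ψ (w t) h - Lψ (D t) h)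
          =O[𝓝[≠] (0:ℂ)] (fun t => ψ (φ (f (c t))) - ψ (w t) - Lψ (D t)) := by
        refine isBigO_of_le _ fun t => ?_
        have := norm_le_pi_norm (ψ (φ (f (c t))) - ψ (w t) - Lψ (D t)) h
        simpa using this
      exact ((h1.trans_isLittleO hlittle).trans_isBigO hDO).tendsto_div_nhds_zero
    have hLψA : Tendsto (fun t : ℂ => Lψ ((t^ν)⁻¹ • D t) h) (𝓝[≠] 0) (𝓝 (Lψ A h)) :=
      ((continuous_apply h).tendsto (Lψ A)).comp ((Lψ.continuous.tendsto A).comp hDA)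
    have limR : Tendsto (fun t : ℂ => (f (c t) h - c t h) / t^ν) (𝓝[≠] 0) (𝓝 (Lψ A h)) := by
      have heq : ∀ᶠ t in 𝓝[≠] (0:ℂ),
          Lψ ((t^ν)⁻¹ • D t) h + (ψ (φ (f (c t))) h - ψ (w t) h - Lψ (D t) h) / t^ν
            = (f (c t) h - c t h) / t^ν := by
        filter_upwards [hcU, self_mem_nhdsWithin] with t htU ht0
        have ht0' : (t:ℂ)^ν ≠ 0 := pow_ne_zero ν ht0
        have h1 : ψ (φ (f (c t))) = f (c t) := hψφ _ (hfU htU)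
        have h2 : ψ (w t) = c t := hψφ _ htU
        rw [map_smul, Pi.smul_apply, smul_eq_mul, h1, h2]
        field_simp
        ring
      have hlim := hLψA.add hEh
      rw [add_zero] at hlim
      exact hlim.congr' heq
    have huniq : (∑ κ : Fin ν → Fin m, (∏ i, u (κ i)) * g h κ p) = Lψ A h :=
      tendsto_nhds_unique limL limR
    rw [huniq]
    -- expand Lψ A h
    have hAdecomp : A = ∑ j : Fin n, A j • (Pi.single j (1:ℂ) : Esp n) := by
      funext k
      simp [Finset.sum_apply, Pi.single_apply]
    have hLA : Lψ A h = ∑ j : Fin n, A j * Lψ (Pi.single j 1) h := by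
      conv_lhs => rw [hAdecomp]
      rw [map_sum, Finset.sum_apply]
      refine Finset.sum_congr rfl fun j _ => ?_
      rw [map_smul, Pi.smul_apply, smul_eq_mul]
    have hLφuv : ∀ r : Fin m, Lφ uv (Fin.castLE hmn.le r)
        = ∑ s : Fin m, u s * Lφ (Pi.single (Fin.castLE hmn.le s) 1) (Fin.castLE hmn.le r) := by
      intro r
      rw [huv, map_sum, Finset.sum_apply]
      refine Finset.sum_congr rfl fun s _ => ?_
      rw [map_smul, Pi.smul_apply, smul_eq_mul]
    have hprod : ∀ κ' : Fin ν → Fin m, (∏ i, Lφ uv (Fin.castLE hmn.le (κ' i)))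
        = ∑ κ : Fin ν → Fin m, (∏ i, u (κ i)) *
            ∏ i, Lφ (Pi.single (Fin.castLE hmn.le (κ i)) 1) (Fin.castLE hmn.le (κ' i)) := by
      intro κ'
      rw [Finset.prod_congr rfl (fun i _ => hLφuv (κ' i)),
        Finset.prod_univ_sum, Fintype.piFinset_univ]
      exact Finset.sum_congr rfl fun κ _ => Finset.prod_mul_distrib
    rw [hLA]
    have hAj : ∀ j, A j = ∑ κ' : Fin ν → Fin m,
        (∏ i, Lφ uv (Fin.castLE hmn.le (κ' i))) * ghat j κ' (φ p) := fun j => by rw [hA]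
    calc (∑ j : Fin n, A j * Lψ (Pi.single j 1) h)
        = ∑ j : Fin n, ∑ κ' : Fin ν → Fin m, ∑ κ : Fin ν → Fin m,
            (∏ i, u (κ i)) * ((Lψ (Pi.single j 1) h) * ghat j κ' (φ p) *
              ∏ i, Lφ (Pi.single (Fin.castLE hmn.le (κ i)) 1) (Fin.castLE hmn.le (κ' i))) := by
          refine Finset.sum_congr rfl fun j _ => ?_
          rw [hAj j, Finset.sum_mul]
          refine Finset.sum_congr rfl fun κ' _ => ?_
          rw [hprod κ', Finset.sum_mul, Finset.sum_mul]
          refine Finset.sum_congr rfl fun κ _ => ?_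
          ring
      _ = ∑ j : Fin n, ∑ κ : Fin ν → Fin m, ∑ κ' : Fin ν → Fin m,
            (∏ i, u (κ i)) * ((Lψ (Pi.single j 1) h) * ghat j κ' (φ p) *
              ∏ i, Lφ (Pi.single (Fin.castLE hmn.le (κ i)) 1) (Fin.castLE hmn.le (κ' i))) :=
          Finset.sum_congr rfl fun j _ => Finset.sum_comm
      _ = ∑ κ : Fin ν → Fin m, ∑ j : Fin n, ∑ κ' : Fin ν → Fin m,
            (∏ i, u (κ i)) * ((Lψ (Pi.single j 1) h) * ghat j κ' (φ p) *
              ∏ i, Lφ (Pi.single (Fin.castLE hmn.le (κ i)) 1) (Fin.castLE hmn.le (κ' i))) :=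
          Finset.sum_comm
      _ = ∑ κ : Fin ν → Fin m, (∏ i, u (κ i)) * G κ := by
          refine Finset.sum_congr rfl fun κ _ => ?_
          rw [hG]
          rw [Finset.mul_sum]
          refine Finset.sum_congr rfl fun j _ => ?_
          rw [Finset.mul_sum]
  have hGsym : ∀ (κ : Fin ν → Fin m) (σ : Equiv.Perm (Fin ν)), G (κ ∘ σ) = G κ := by
    intro κ σ
    rw [hG]
    refine Finset.sum_congr rfl fun j _ => ?_
    refine (Fintype.sum_equiv (Equiv.arrowCongr σ.symm (Equiv.refl (Fin m))) _ _ ?_).symm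
    intro κ'
    have he : (Equiv.arrowCongr σ.symm (Equiv.refl (Fin m))) κ' = κ' ∘ σ := by
      funext i; simp [Equiv.arrowCongr]
    rw [he, hghatsym j κ' σ]
    congr 1
    exact (Equiv.prod_comp σ (fun i => Lφ (Pi.single (Fin.castLE hmn.le (κ i)) 1)
      (Fin.castLE hmn.le (κ' i)))).symm
  have hzero : ∀ u : Fin m → ℂ,
      ∑ κ : Fin ν → Fin m, (∏ i, u (κ i)) * (g h κ p - G κ) = 0 := by
    intro u
    simp only [mul_sub]
    rw [Finset.sum_sub_distrib, key u, sub_self]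
  have hdsym : ∀ (κ : Fin ν → Fin m) (σ : Equiv.Perm (Fin ν)),
      g h (κ ∘ σ) p - G (κ ∘ σ) = g h κ p - G κ := by
    intro κ σ
    rw [hgsym h κ σ, hGsym κ σ]
  have hfin := polarization (fun κ => g h κ p - G κ) hdsym hzero κ₀
  have hmain : g h κ₀ p = G κ₀ := sub_eq_zero.mp hfin
  simp only [hG] at hmain
  exact hmain
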